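/- Let δ > 0 and define (p_n) by p₀ = 1+δ, p_{n+1} = 1+δ − 1/(1+δ+p_n); let ρ₀ := 1, ρ_m := 1/(1+δ+p_{m−1}) for m ≥ 1, and q_n := ∏_{m=0}^n ρ_m. Then p_n > δ for every n, and there exist constants c, C > 0 and δ₀ ∈ (0,1) such that for all δ ∈ (0,δ₀), c/δ ≤ Σ_{n=0}^∞ q_n/(p_n − δ)² ≤ C/δ. -/

import Mathlib

open Real

noncomputable def vseq (δ : ℝ) : ℕ → ℝ
  | 0 => 1
  | 1 => 2 * (1 + δ)
  | n + 2 => 2 * (1 + δ) * vseq δ (n + 1) - vseq δ n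

lemma vseq_key {δ : ℝ} (hδ : 0 < δ) (hδ4 : δ ≤ 1/4) :
    ∀ n, 0 < vseq δ n ∧ (1 + 4*δ) * vseq δ n ≤ vseq δ (n + 1) := by
  intro n
  induction n with
  | zero => constructor
            · norm_num [vseq]
            · simp only [vseq]; nlinarith
  | succ n ih =>
    obtain ⟨h1, h2⟩ := ih
    have hpos : 0 < vseq δ (n+1) := lt_of_lt_of_le (by nlinarith) h2
    refine ⟨hpos, ?_⟩
    have : vseq δ (n+2) = 2 * (1 + δ) * vseq δ (n+1) - vseq δ n := rfl
    rw [this]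
    nlinarith [mul_le_mul_of_nonneg_left h2 (by linarith : (0:ℝ) ≤ 1 - 2*δ), h1.le,
      mul_nonneg (mul_nonneg hδ.le (by linarith : (0:ℝ) ≤ 1 - 4*δ)) h1.le]

lemma p_gt_delta : ∀ δ : ℝ, 0 < δ → ∀ p : ℕ → ℝ, p 0 = 1 + δ →
    (∀ n, p (n + 1) = 1 + δ - 1 / (1 + δ + p n)) → ∀ n, δ < p n := by
  intro δ hδ p hp0 hrec n
  induction n with
  | zero => rw [hp0]; linarith
  | succ n ih =>
    rw [hrec]
    have h1 : (1:ℝ) < 1 + δ + p n := by linarith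
    have : 1 / (1 + δ + p n) < 1 := by
      rw [div_lt_one (by linarith)]; linarith
    linarith

theorem stmt_13 :
    (∀ δ : ℝ, 0 < δ → ∀ p : ℕ → ℝ, p 0 = 1 + δ →
      (∀ n, p (n + 1) = 1 + δ - 1 / (1 + δ + p n)) → ∀ n, δ < p n) ∧
    ∃ c > (0:ℝ), ∃ C > (0:ℝ), ∃ δ₀ ∈ Set.Ioo (0:ℝ) 1, ∀ δ ∈ Set.Ioo (0:ℝ) δ₀,
      ∀ p ρ q : ℕ → ℝ,
        p 0 = 1 + δ →
        (∀ n, p (n + 1) = 1 + δ - 1 / (1 + δ + p n)) →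
        ρ 0 = 1 →
        (∀ m, 1 ≤ m → ρ m = 1 / (1 + δ + p (m - 1))) →
        (∀ n, q n = ∏ m ∈ Finset.range (n + 1), ρ m) →
        Summable (fun n => q n / (p n - δ) ^ 2) ∧
        c / δ ≤ ∑' n, q n / (p n - δ) ^ 2 ∧
        (∑' n, q n / (p n - δ) ^ 2) ≤ C / δ := by
  refine ⟨p_gt_delta, 1/4, by norm_num, 1, by norm_num, 1/4, by norm_num, ?_⟩
  rintro δ ⟨hδ0, hδ4⟩ p ρ q hp0 hprec hρ0 hρ hq
  set v : ℕ → ℝ := vseq δ with hvdef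
  have key := vseq_key hδ0 hδ4.le
  have hv : ∀ n, 0 < v n := fun n => (key n).1
  have hratio : ∀ n, (1 + 4*δ) * v n ≤ v (n+1) := fun n => (key n).2
  have hpδ : ∀ n, δ < p n := p_gt_delta δ hδ0 p hp0 hprec
  have hps : ∀ n, 0 < 1 + δ + p n := fun n => by have := hpδ n; linarith
  -- relation between p and v
  have hpv : ∀ n, (1 + δ + p n) * v n = v (n + 1) := by
    intro n
    induction n with
    | zero =>
      have h0 : v 0 = 1 := rfl
      have h1 : v 1 = 2 * (1 + δ) := rfl
      rw [hp0, h0, h1]; ring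
    | succ n ih =>
      have h0 := (hps n).ne'
      have hv2 : v (n + 1 + 1) = 2 * (1 + δ) * v (n + 1) - v n := rfl
      rw [hprec n, hv2, ← ih]
      field_simp
      ring
  -- q n = 1 / v n
  have hq' : ∀ n, q n * v n = 1 := by
    intro n
    induction n with
    | zero =>
      have h0 : v 0 = 1 := rfl
      rw [hq 0, Finset.prod_range_one, hρ0, h0]; ring
    | succ n ih =>
      have hqs : q (n+1) = q n * ρ (n+1) := by
        rw [hq (n+1), hq n, Finset.prod_range_succ]
      have hρs : ρ (n+1) = 1 / (1 + δ + p n) := by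
        have := hρ (n+1) (by omega)
        simpa using this
      have h0 := (hps n).ne'
      rw [hqs, hρs, ← hpv n]
      field_simp
      linear_combination ih
  obtain ⟨w, hwdef⟩ : ∃ w : ℕ → ℝ, w = fun n => v (n+1) - (1 + 2*δ) * v n := ⟨_, rfl⟩
  have hw0 : w 0 = 1 := by
    have h0 : v 0 = 1 := rfl
    have h1 : v 1 = 2 * (1 + δ) := rfl
    simp only [hwdef, h0, h1]; ring
  have hwrec : ∀ n, w (n+1) = w n + 2*δ * v n := by
    intro n
    have hv2 : v (n + 2) = 2 * (1 + δ) * v (n + 1) - v n := rfl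
    simp only [hwdef, hv2]; ring
  have hwlow : ∀ n, 2*δ * v n ≤ w n := by
    intro n; have := hratio n; simp only [hwdef]; linarith
  have hvge1 : ∀ n, 1 ≤ v n := by
    intro n
    induction n with
    | zero => norm_num [hvdef, vseq]
    | succ n ih => nlinarith [hratio n, hv n]
  have hw1 : ∀ n : ℕ, 1 + 2*δ*n ≤ w n := by
    intro n
    induction n with
    | zero => simp [hw0]
    | succ n ih =>
      rw [hwrec n]
      push_cast
      nlinarith [hvge1 n]
  have hwpos : ∀ n, 0 < w n := by
    intro n
    have h1 : (0:ℝ) ≤ (n:ℝ) := Nat.cast_nonneg n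
    nlinarith [hw1 n]
  have hwmono : ∀ n, w n ≤ w (n+1) := by
    intro n; rw [hwrec n]; nlinarith [hv n]
  have hwdouble : ∀ n, w (n+1) ≤ 2 * w n := by
    intro n; rw [hwrec n]; linarith [hwlow n]
  -- term identity
  have hterm : ∀ n, q n / (p n - δ) ^ 2 = v n / (w n) ^ 2 := by
    intro n
    have hvne := (hv n).ne'
    have hwne := (hwpos n).ne'
    have hpn : p n - δ = w n / v n := by
      rw [eq_div_iff hvne]
      have := hpv n
      simp only [hwdef]
      linarith
    have hqn : q n = 1 / v n := by
      rw [eq_div_iff hvne]; exact hq' n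
    rw [hpn, hqn]
    field_simp
  have htele : ∀ n, 1/w n - 1/w (n+1) = 2*δ * v n / (w n * w (n+1)) := by
    intro n
    have h1 := (hwpos n).ne'
    have h2 := (hwpos (n+1)).ne'
    have h := hwrec n
    field_simp
    linarith
  have hnn : ∀ n, 0 ≤ q n / (p n - δ) ^ 2 := by
    intro n
    rw [hterm n]
    exact le_of_lt (div_pos (hv n) (pow_pos (hwpos n) 2))
  have hub : ∀ n, q n / (p n - δ) ^ 2 ≤ (1/δ) * (1/w n - 1/w (n+1)) := by
    intro n
    rw [hterm n, htele n]
    have heq : (1/δ) * (2*δ * v n / (w n * w (n+1))) = 2 * v n / (w n * w (n+1)) := by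
      rw [← mul_div_assoc]
      congr 1
      field_simp
    rw [heq, div_le_div_iff₀ (pow_pos (hwpos n) 2) (mul_pos (hwpos n) (hwpos (n+1)))]
    nlinarith [mul_le_mul_of_nonneg_left (hwdouble n) (mul_nonneg (hv n).le (hwpos n).le)]
  have hlb : ∀ n, (1/(2*δ)) * (1/w n - 1/w (n+1)) ≤ q n / (p n - δ) ^ 2 := by
    intro n
    rw [hterm n, htele n]
    have heq : (1/(2*δ)) * (2*δ * v n / (w n * w (n+1))) = v n / (w n * w (n+1)) := by
      rw [← mul_div_assoc]
      congr 1
      field_simp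
    rw [heq, div_le_div_iff₀ (mul_pos (hwpos n) (hwpos (n+1))) (pow_pos (hwpos n) 2)]
    nlinarith [mul_le_mul_of_nonneg_left (hwmono n) (mul_nonneg (hv n).le (hwpos n).le)]
  have hteleSum : ∀ N, ∑ n ∈ Finset.range N, (1/w n - 1/w (n+1)) = 1 - 1/w N := by
    intro N
    rw [Finset.sum_range_sub' (fun n => 1/w n) N, hw0]
    norm_num
  have hpartial : ∀ N, ∑ n ∈ Finset.range N, q n / (p n - δ) ^ 2 ≤ 1/δ := by
    intro N
    calc ∑ n ∈ Finset.range N, q n / (p n - δ) ^ 2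
        ≤ ∑ n ∈ Finset.range N, (1/δ) * (1/w n - 1/w (n+1)) :=
          Finset.sum_le_sum (fun i _ => hub i)
      _ = (1/δ) * (1 - 1/w N) := by rw [← Finset.mul_sum, hteleSum N]
      _ ≤ 1/δ := by
          have h1 : 0 < w N := hwpos N
          have h2 : 0 ≤ 1 / w N := by positivity
          have h3 : 0 < 1/δ := by positivity
          nlinarith
  have hsummable : Summable (fun n => q n / (p n - δ) ^ 2) :=
    summable_of_sum_range_le hnn hpartial
  refine ⟨hsummable, ?_, ?_⟩
  · -- lower bound
    set N : ℕ := Nat.ceil (1/(2*δ)) with hN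
    have hNlb : 1/(2*δ) ≤ (N:ℝ) := Nat.le_ceil _
    have hwN : 2 ≤ w N := by
      have := hw1 N
      have h2 : (1:ℝ) ≤ 2*δ*(N:ℝ) := by
        rw [div_le_iff₀ (by positivity)] at hNlb
        linarith [hNlb]
      linarith
    have hwNinv : 1 / w N ≤ 1/2 := by
      rw [div_le_div_iff₀ (hwpos N) (by norm_num)]
      linarith
    have hstep : (1/4) / δ ≤ ∑ n ∈ Finset.range N, q n / (p n - δ) ^ 2 := by
      calc (1/4) / δ = (1/(2*δ)) * (1/2) := by field_simp; ring
        _ ≤ (1/(2*δ)) * (1 - 1/w N) := by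
            have h3 : 0 < 1/(2*δ) := by positivity
            nlinarith
        _ = ∑ n ∈ Finset.range N, (1/(2*δ)) * (1/w n - 1/w (n+1)) := by
            rw [← Finset.mul_sum, hteleSum N]
        _ ≤ ∑ n ∈ Finset.range N, q n / (p n - δ) ^ 2 :=
            Finset.sum_le_sum (fun i _ => hlb i)
    exact hstep.trans (hsummable.sum_le_tsum (Finset.range N) (fun i _ => hnn i))
  · exact Real.tsum_le_of_sum_range_le hnn hpartial
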